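/- Let X be a real Hilbert space, let g: [0,1] → X be absolutely continuous with derivative ġ, and let F: X × [0,1] → ℝ be a function such that F(·,t) is continuously Fréchet differentiable on X for every t ∈ [0,1], with differential d₁F(·,t). Fix t₀ ∈ [0,1], set ψ(t) := F(g(t),t) and ψ₀(t) := F(g(t₀),t). Assume that t₀ is a differentiability point of both ψ and g, that t₀ is a Lebesgue point of ġ, and that d₁F: X × [0,1] → X* is continuous at the point (g(t₀),t₀). Then ψ₀ is differentiable at t₀ and ψ̇₀(t₀) = ψ̇(t₀) − d₁F(g(t₀),t₀)(ġ(t₀)). -/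

import Mathlib

open MeasureTheory Filter Set

noncomputable section

/-- Chain-rule lemma in a Hilbert space: if `g : [0,1] → X` is absolutely continuous with
derivative `g'`, `F(·,t)` is `C¹` on `X` with differential `d₁F(·,t)`, `t₀` is a
differentiability point of `ψ(t) = F(g(t),t)` and of `g`, a Lebesgue point of `g'`, and
`d₁F` is continuous at `(g(t₀),t₀)`, then `ψ₀(t) = F(g(t₀),t)` is differentiable at `t₀`
with `ψ₀'(t₀) = ψ'(t₀) − d₁F(g(t₀),t₀)(g'(t₀))`. -/
theorem chain_rule_hilbert {X : Type} [NormedAddCommGroup X] [InnerProductSpace ℝ X]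
    [CompleteSpace X]
    (g g' : ℝ → X)
    (hg'int : IntervalIntegrable g' MeasureTheory.volume 0 1)
    (hgAC : ∀ t ∈ Set.Icc (0:ℝ) 1, g t = g 0 + ∫ s in (0:ℝ)..t, g' s)
    (F : X → ℝ → ℝ) (dF : X → ℝ → (X →L[ℝ] ℝ))
    (hF : ∀ t ∈ Set.Icc (0:ℝ) 1, ∀ x : X, HasFDerivAt (fun y => F y t) (dF x t) x)
    (hdFcont : ∀ t ∈ Set.Icc (0:ℝ) 1, Continuous fun x => dF x t)
    (t₀ : ℝ) (ht₀ : t₀ ∈ Set.Icc (0:ℝ) 1)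
    (ψ' : ℝ)
    (hψ : HasDerivWithinAt (fun t => F (g t) t) ψ' (Set.Icc (0:ℝ) 1) t₀)
    (hgdiff : HasDerivWithinAt g (g' t₀) (Set.Icc (0:ℝ) 1) t₀)
    (hLeb : Filter.Tendsto
      (fun h : ℝ => (1 / h) * ∫ s in t₀..(t₀ + h), ‖g' s - g' t₀‖)
      (nhdsWithin 0 {h : ℝ | h ≠ 0 ∧ t₀ + h ∈ Set.Icc (0:ℝ) 1}) (nhds 0))
    (hdF : ContinuousWithinAt (fun p : X × ℝ => dF p.1 p.2)
      (Set.univ ×ˢ Set.Icc (0:ℝ) 1) (g t₀, t₀)) :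
    HasDerivWithinAt (fun t => F (g t₀) t)
      (ψ' - dF (g t₀) t₀ (g' t₀)) (Set.Icc (0:ℝ) 1) t₀ := by

  -- Strategy: `F (g t₀) t = F (g t) t - (F (g t) t - F (g t₀) t)`.
  -- The second function has derivative `dF (g t₀) t₀ (g' t₀)` at `t₀` within `Icc 0 1`.
  set s : Set ℝ := Set.Icc (0:ℝ) 1 with hs
  set L := dF (g t₀) t₀ with hLdef
  have key : HasDerivWithinAt (fun t => F (g t) t - F (g t₀) t) (L (g' t₀)) s t₀ := by
    rw [hasDerivWithinAt_iff_isLittleO]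
    have hgO : (fun t => g t - g t₀) =O[nhdsWithin t₀ s] fun t => t - t₀ :=
      hgdiff.hasFDerivWithinAt.isBigO_sub
    have hB : (fun t => L (g t - g t₀ - (t - t₀) • g' t₀)) =o[nhdsWithin t₀ s]
        fun t => t - t₀ :=
      (L.isBigO_comp _ _).trans_isLittleO (hasDerivWithinAt_iff_isLittleO.1 hgdiff)
    have hA : (fun t => F (g t) t - F (g t₀) t - L (g t - g t₀)) =o[nhdsWithin t₀ s]
        fun t => g t - g t₀ := by
      rw [Asymptotics.isLittleO_iff]
      intro c hc
      obtain ⟨δ, hδ, hδ'⟩ := Metric.tendsto_nhdsWithin_nhds.1 hdF c hc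
      have hg_cont : ContinuousWithinAt g s t₀ := hgdiff.continuousWithinAt
      have h1 : ∀ᶠ t in nhdsWithin t₀ s, dist (g t) (g t₀) < δ := by
        have : Metric.ball (g t₀) δ ∈ nhds (g t₀) := Metric.ball_mem_nhds _ hδ
        filter_upwards [hg_cont this] with t ht using ht
      have h2 : ∀ᶠ t in nhdsWithin t₀ s, dist t t₀ < δ := by
        have : Metric.ball t₀ δ ∈ nhdsWithin t₀ s :=
          nhdsWithin_le_nhds (Metric.ball_mem_nhds _ hδ)
        filter_upwards [this] with t ht using ht
      have h3 : ∀ᶠ t in nhdsWithin t₀ s, t ∈ s := eventually_mem_nhdsWithin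
      filter_upwards [h1, h2, h3] with t ht1 ht2 ht3
      have hconv : Convex ℝ (Metric.ball (g t₀) δ) := convex_ball _ _
      have hderiv : ∀ z ∈ Metric.ball (g t₀) δ,
          HasFDerivWithinAt (fun y => F y t) (dF z t) (Metric.ball (g t₀) δ) z :=
        fun z _ => (hF t ht3 z).hasFDerivWithinAt
      have hbound : ∀ z ∈ Metric.ball (g t₀) δ, ‖dF z t - L‖ ≤ c := by
        intro z hz
        have hmem : (z, t) ∈ (Set.univ ×ˢ Set.Icc (0:ℝ) 1) := ⟨trivial, ht3⟩
        have hd : dist ((z, t) : X × ℝ) (g t₀, t₀) < δ := by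
          rw [Prod.dist_eq]
          exact max_lt (by simpa [Metric.mem_ball] using hz) ht2
        have := hδ' hmem hd
        rw [dist_eq_norm] at this
        exact this.le
      have hmv := hconv.norm_image_sub_le_of_norm_hasFDerivWithin_le' hderiv hbound
        (Metric.mem_ball_self hδ) (by simpa [Metric.mem_ball] using ht1)
      simpa using hmv
    have hsum := (hA.trans_isBigO hgO).add hB
    refine hsum.congr' ?_ EventuallyEq.rfl
    filter_upwards with t
    simp only [map_sub, _root_.map_smul, smul_eq_mul]
    ring
  have hfin := hψ.sub key
  have heq : (fun t => F (g t) t - (F (g t) t - F (g t₀) t)) = fun t => F (g t₀) t := by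
    funext t; ring
  rw [← heq]
  exact hfin
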